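/- In the standing setup, the following three assertions hold: (i) rank(Ω) ≤ d(d−1)/2; (ii) rank(Ω) = d(d−1)/2 if and only if the d(d−1)/2 vectors vec Ψ(C_r, C_s) for 1 ≤ r < s ≤ d are linearly independent; (iii) the kernel ker(Ω) = {h ∈ ℝ^{d(d+1)/2} : Ω h = 0} has dimension d if and only if rank(Ω) = d(d−1)/2. -/

import Mathlib

open Matrix

/-- The flattening of the 4-way array `Ψ(D,F)`: the function on quadruples `(i,j,k,ℓ)` with
value `d_{i,k} f_{j,ℓ} + d_{j,ℓ} f_{i,k} − d_{i,ℓ} f_{j,k} − d_{j,k} f_{i,ℓ}`. -/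
def vecPsi {d₁ d₂ : ℕ} (D F : Matrix (Fin d₁) (Fin d₂) ℝ) :
    Fin d₁ × Fin d₁ × Fin d₂ × Fin d₂ → ℝ :=
  fun q => D q.1 q.2.2.1 * F q.2.1 q.2.2.2 + D q.2.1 q.2.2.2 * F q.1 q.2.2.1
    - D q.1 q.2.2.2 * F q.2.1 q.2.2.1 - D q.2.1 q.2.2.1 * F q.1 q.2.2.2

namespace Stmt5Aux

variable {d₁ d₂ : ℕ}

lemma vecPsi_symm (D F : Matrix (Fin d₁) (Fin d₂) ℝ) : vecPsi D F = vecPsi F D := by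
  funext q; simp only [vecPsi]; ring

lemma vecPsi_self (a : Fin d₁ → ℝ) (b : Fin d₂ → ℝ) :
    vecPsi (vecMulVec a b) (vecMulVec a b) = 0 := by
  funext q
  simp only [vecPsi, vecMulVec_apply, Pi.zero_apply]
  ring

/-- `vecPsi` as a bilinear map. -/
noncomputable def psiBil :
    Matrix (Fin d₁) (Fin d₂) ℝ →ₗ[ℝ] Matrix (Fin d₁) (Fin d₂) ℝ →ₗ[ℝ]
      (Fin d₁ × Fin d₁ × Fin d₂ × Fin d₂ → ℝ) :=
  LinearMap.mk₂ ℝ vecPsi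
    (fun D D' F => by
      funext q
      simp only [vecPsi, Matrix.add_apply, Pi.add_apply]
      ring)
    (fun c D F => by
      funext q
      simp only [vecPsi, Matrix.smul_apply, Pi.smul_apply, smul_eq_mul]
      ring)
    (fun D F F' => by
      funext q
      simp only [vecPsi, Matrix.add_apply, Pi.add_apply]
      ring)
    (fun c D F => by
      funext q
      simp only [vecPsi, Matrix.smul_apply, Pi.smul_apply, smul_eq_mul]
      ring)

lemma vecPsi_sum_sum {d : ℕ} (G H : Fin d → Matrix (Fin d₁) (Fin d₂) ℝ) (a b : Fin d → ℝ) :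
    vecPsi (∑ r, a r • G r) (∑ s, b s • H s)
      = ∑ r, ∑ s, (a r * b s) • vecPsi (G r) (H s) := by
  calc psiBil (∑ r, a r • G r) (∑ s, b s • H s)
      = ∑ s, psiBil (∑ r, a r • G r) (b s • H s) := map_sum _ _ _
    _ = ∑ s, ∑ r, (a r * b s) • vecPsi (G r) (H s) := by
        refine Finset.sum_congr rfl fun s _ => ?_
        rw [map_sum, LinearMap.sum_apply]
        refine Finset.sum_congr rfl fun r _ => ?_
        rw [LinearMap.map_smul, LinearMap.map_smul₂, smul_smul, mul_comm (b s) (a r)]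
        rfl
    _ = ∑ r, ∑ s, (a r * b s) • vecPsi (G r) (H s) := Finset.sum_comm

/-- Pairs `p.1 ≤ p.2` split into strict pairs plus the diagonal. -/
def ltSumEquiv (d : ℕ) :
    ({p : Fin d × Fin d // p.1 < p.2} ⊕ Fin d) ≃ {p : Fin d × Fin d // p.1 ≤ p.2} where
  toFun x := x.elim (fun p => ⟨p.1, le_of_lt p.2⟩) (fun i => ⟨(i, i), le_refl i⟩)
  invFun p := if h : p.1.1 < p.1.2 then Sum.inl ⟨p.1, h⟩ else Sum.inr p.1.1
  left_inv x := by
    rcases x with ⟨p, h⟩ | i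
    · simp [h]
    · simp
  right_inv p := by
    rcases p with ⟨⟨a, b⟩, hab⟩
    by_cases h : a < b
    · simp [h]
    · have hab' : a = b := le_antisymm hab (not_lt.1 h)
      subst hab'
      simp [h]

lemma card_le_pairs (d : ℕ) :
    Fintype.card {p : Fin d × Fin d // p.1 ≤ p.2} = d * (d + 1) / 2 := by
  classical
  rw [← Fintype.card_congr (Sym2.sortEquiv (α := Fin d)), Sym2.card, Fintype.card_fin,
    Nat.choose_two_right, Nat.add_sub_cancel, Nat.mul_comm]

lemma card_lt_pairs (d : ℕ) :
    Fintype.card {p : Fin d × Fin d // p.1 < p.2} = d * (d - 1) / 2 := by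
  classical
  have h := Fintype.card_congr (ltSumEquiv d)
  rw [Fintype.card_sum, Fintype.card_fin, card_le_pairs] at h
  rcases Nat.eq_zero_or_pos d with rfl | hd
  · simpa using h
  obtain ⟨m, rfl⟩ : ∃ m, d = m + 1 := ⟨d - 1, by omega⟩
  have hA : 2 ∣ (m + 1) * m := by
    have : Even ((m + 1) * m) := by rw [Nat.mul_comm]; exact Nat.even_mul_succ_self m
    exact this.two_dvd
  rw [show (m + 1) * (m + 1 + 1) = (m + 1) * m + 2 * (m + 1) from by ring] at h
  simp only [Nat.add_sub_cancel]
  set A := (m + 1) * m with hAdef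
  omega

end Stmt5Aux

theorem stmt5 (d d₁ d₂ : ℕ) (hd : 2 ≤ d) (hd₁ : 1 ≤ d₁) (hd₂ : 1 ≤ d₂)
    (u : Fin d → Fin d₁ → ℝ) (v : Fin d → Fin d₂ → ℝ)
    (hu : ∀ ℓ, u ℓ ⬝ᵥ u ℓ = 1) (hv : ∀ ℓ, v ℓ ⬝ᵥ v ℓ = 1)
    (hli : LinearIndependent ℝ
      (fun ℓ : Fin d => fun pr : Fin d₂ × Fin d₁ => v ℓ pr.1 * u ℓ pr.2))
    (Θ : Matrix (Fin d) (Fin d) ℝ) (hΘ : IsUnit Θ.det)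
    (W : Fin d → Matrix (Fin d₁) (Fin d₂) ℝ)
    (hW : ∀ ℓ, W ℓ = ∑ i, Θ⁻¹ i ℓ • Matrix.vecMulVec (u i) (v i))
    (Ω : Matrix (Fin d₁ × Fin d₁ × Fin d₂ × Fin d₂) {pr : Fin d × Fin d // pr.1 ≤ pr.2} ℝ)
    (hΩ : ∀ idx pr, Ω idx pr = vecPsi (W pr.val.1) (W pr.val.2) idx) :
    Ω.rank ≤ d * (d - 1) / 2 ∧
    (Ω.rank = d * (d - 1) / 2 ↔
      LinearIndependent ℝ (fun pr : {pr : Fin d × Fin d // pr.1 < pr.2} =>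
        vecPsi (Matrix.vecMulVec (u pr.val.1) (v pr.val.1))
          (Matrix.vecMulVec (u pr.val.2) (v pr.val.2)))) ∧
    (Module.finrank ℝ (LinearMap.ker Ω.mulVecLin) = d ↔ Ω.rank = d * (d - 1) / 2) := by
  classical
  let C : Fin d → Matrix (Fin d₁) (Fin d₂) ℝ := fun i => Matrix.vecMulVec (u i) (v i)
  let P : {pr : Fin d × Fin d // pr.1 < pr.2} → (Fin d₁ × Fin d₁ × Fin d₂ × Fin d₂ → ℝ) :=
    fun pr => vecPsi (C pr.val.1) (C pr.val.2)
  let colW : {pr : Fin d × Fin d // pr.1 ≤ pr.2} → (Fin d₁ × Fin d₁ × Fin d₂ × Fin d₂ → ℝ) :=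
    fun pr => vecPsi (W pr.val.1) (W pr.val.2)
  have hC : ∀ r, (∑ ℓ, Θ ℓ r • W ℓ) = C r := by
    intro r
    have hinv := Matrix.nonsing_inv_mul Θ hΘ
    have h1 : ∀ i, (∑ ℓ, Θ⁻¹ i ℓ * Θ ℓ r) = if i = r then (1 : ℝ) else 0 := by
      intro i
      have h2 := congrFun (congrFun hinv i) r
      simpa [Matrix.mul_apply, Matrix.one_apply] using h2
    calc (∑ ℓ, Θ ℓ r • W ℓ)
        = ∑ ℓ, ∑ i, (Θ⁻¹ i ℓ * Θ ℓ r) • C i := by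
          refine Finset.sum_congr rfl fun ℓ _ => ?_
          rw [hW ℓ, Finset.smul_sum]
          refine Finset.sum_congr rfl fun i _ => ?_
          rw [smul_smul, mul_comm]
      _ = ∑ i, (∑ ℓ, Θ⁻¹ i ℓ * Θ ℓ r) • C i := by
          rw [Finset.sum_comm]
          refine Finset.sum_congr rfl fun i _ => ?_
          rw [Finset.sum_smul]
      _ = C r := by
          simp [h1, ite_smul]
  have hPsiC_mem : ∀ r s, vecPsi (C r) (C s) ∈ Submodule.span ℝ (Set.range P) := by
    intro r s
    rcases lt_trichotomy r s with h | h | h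
    · exact Submodule.subset_span ⟨⟨(r, s), h⟩, rfl⟩
    · subst h
      rw [show vecPsi (C r) (C r) = 0 from Stmt5Aux.vecPsi_self (u r) (v r)]
      exact Submodule.zero_mem _
    · rw [Stmt5Aux.vecPsi_symm]
      exact Submodule.subset_span ⟨⟨(s, r), h⟩, rfl⟩
  have hPsiW_memP : ∀ i j, vecPsi (W i) (W j) ∈ Submodule.span ℝ (Set.range P) := by
    intro i j
    rw [hW i, hW j, Stmt5Aux.vecPsi_sum_sum]
    exact Submodule.sum_mem _ fun r _ => Submodule.sum_mem _ fun s _ =>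
      Submodule.smul_mem _ _ (hPsiC_mem r s)
  have hPsiW_memCol : ∀ i j, vecPsi (W i) (W j) ∈ Submodule.span ℝ (Set.range colW) := by
    intro i j
    rcases le_total i j with h | h
    · exact Submodule.subset_span ⟨⟨(i, j), h⟩, rfl⟩
    · rw [Stmt5Aux.vecPsi_symm]
      exact Submodule.subset_span ⟨⟨(j, i), h⟩, rfl⟩
  have spanEq : Submodule.span ℝ (Set.range colW) = Submodule.span ℝ (Set.range P) := by
    apply le_antisymm
    · rw [Submodule.span_le]
      rintro _ ⟨pr, rfl⟩
      exact hPsiW_memP _ _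
    · rw [Submodule.span_le]
      rintro _ ⟨pr, rfl⟩
      show vecPsi (C pr.val.1) (C pr.val.2) ∈ _
      rw [← hC pr.val.1, ← hC pr.val.2, Stmt5Aux.vecPsi_sum_sum]
      exact Submodule.sum_mem _ fun i _ => Submodule.sum_mem _ fun j _ =>
        Submodule.smul_mem _ _ (hPsiW_memCol i j)
  have hΩT : Ωᵀ = colW := by
    funext pr idx
    exact hΩ idx pr
  have hrank : Ω.rank = Module.finrank ℝ (Submodule.span ℝ (Set.range P)) := by
    rw [Matrix.rank_eq_finrank_span_cols, show Ω.col = colW from hΩT, spanEq]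
  have cardT := Stmt5Aux.card_lt_pairs d
  have cardS := Stmt5Aux.card_le_pairs d
  have hle : Ω.rank ≤ d * (d - 1) / 2 := by
    rw [hrank, ← cardT]
    exact finrank_range_le_card P
  have hiff : Ω.rank = d * (d - 1) / 2 ↔ LinearIndependent ℝ P := by
    rw [hrank, linearIndependent_iff_card_eq_finrank_span, cardT, Set.finrank]
    exact ⟨fun h => h.symm, fun h => h.symm⟩
  have harith : d * (d - 1) / 2 + d = d * (d + 1) / 2 := by
    obtain ⟨m, rfl⟩ : ∃ m, d = m + 1 := ⟨d - 1, by omega⟩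
    have hA : 2 ∣ (m + 1) * m := by
      have : Even ((m + 1) * m) := by
        rw [Nat.mul_comm]; exact Nat.even_mul_succ_self m
      exact this.two_dvd
    rw [Nat.add_sub_cancel,
      show (m + 1) * (m + 1 + 1) = (m + 1) * m + 2 * (m + 1) from by ring]
    set A := (m + 1) * m
    omega
  have hrn := LinearMap.finrank_range_add_finrank_ker Ω.mulVecLin
  rw [Module.finrank_fintype_fun_eq_card, cardS] at hrn
  have hrankdef : Ω.rank = Module.finrank ℝ (LinearMap.range Ω.mulVecLin) := rfl
  rw [← hrankdef] at hrn
  have hker : Module.finrank ℝ (LinearMap.ker Ω.mulVecLin) = d ↔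
      Ω.rank = d * (d - 1) / 2 := by
    set a := d * (d - 1) / 2
    set b := d * (d + 1) / 2
    omega
  exact ⟨hle, hiff, hker⟩
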